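/- Let n ≥ 2 and let D be a division ring with an element a ∉ {0, 1}. Then the matrix ring M_n(D) is not a GNC ring (the matrix with a in the (1,1) entry and zeros elsewhere is neither a unit nor nil-clean). -/
import Mathlib

open Matrix

/-- An element is nil-clean if it is the sum of an idempotent and a nilpotent. -/
def IsNilClean {R : Type*} [Ring R] (a : R) : Prop :=
  ∃ e q : R, IsIdempotentElem e ∧ IsNilpotent q ∧ a = e + q

/-- A ring is GNC (generalized nil-clean) if every non-unit is nil-clean. -/
def IsGNC (R : Type*) [Ring R] : Prop :=
  ∀ a : R, ¬ IsUnit a → IsNilClean a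

/-- Auxiliary scalar recurrence tracking `q^k *ᵥ e₀` in the span of `e₀` and `p = e *ᵥ e₀`. -/
def gncAux {D : Type*} [Ring D] (a c : D) : ℕ → D × D
  | 0 => (1, 0)
  | k+1 => (a * ((gncAux a c k).1 + c * (gncAux a c k).2),
            -((gncAux a c k).1 + (gncAux a c k).2))

lemma gncMulVecRight {n : ℕ} {D : Type*} [Ring D] (M : Matrix (Fin n) (Fin n) D)
    (w : Fin n → D) (s : D) :
    M *ᵥ (fun j => w j * s) = fun i => (M *ᵥ w) i * s := by
  funext i; simp [Matrix.mulVec, dotProduct, Finset.sum_mul, mul_assoc]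

lemma gncStdMulVec {n : ℕ} {D : Type*} [Ring D] (i0 : Fin n) (a : D) (w : Fin n → D) :
    (Matrix.single i0 i0 a) *ᵥ w
      = fun i => (if i = i0 then (1:D) else 0) * (a * w i0) := by
  funext i
  simp [Matrix.mulVec, dotProduct, Matrix.single, ite_and, eq_comm, mul_assoc]

theorem matrix_divisionRing_not_gnc {D : Type*} [DivisionRing D] (n : ℕ) (hn : 2 ≤ n)
    (a : D) (h0 : a ≠ 0) (h1 : a ≠ 1) :
    ¬ IsGNC (Matrix (Fin n) (Fin n) D) := by
  intro hGNC
  set i0 : Fin n := ⟨0, by omega⟩ with hi0def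
  set i1 : Fin n := ⟨1, by omega⟩ with hi1def
  set A : Matrix (Fin n) (Fin n) D := Matrix.single i0 i0 a with hAdef
  -- A is not a unit
  have hnotunit : ¬ IsUnit A := by
    intro hu
    obtain ⟨B, h⟩ := hu.exists_right_inv
    have h2 := congrFun (congrFun h i1) i1
    have hA1 : ∀ k, A i1 k = 0 := by
      intro k
      simp only [hAdef, Matrix.single]
      have : i0 ≠ i1 := by simp [hi0def, hi1def, Fin.ext_iff]
      simp [Matrix.of_apply, this.symm, Fin.ext_iff, hi0def, hi1def]
    rw [Matrix.mul_apply] at h2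
    simp only [hA1, zero_mul, Finset.sum_const_zero] at h2
    have : (1 : Matrix (Fin n) (Fin n) D) i1 i1 = 1 := Matrix.one_apply_eq i1
    rw [this] at h2
    exact one_ne_zero h2.symm
  obtain ⟨e, q, he, ⟨m, hm⟩, hA⟩ := hGNC A hnotunit
  -- ensure positive nilpotency exponent
  set N : ℕ := m + 1 with hNdef
  have hN : q ^ N = 0 := by rw [hNdef, pow_succ, hm, zero_mul]
  have hNpos : N ≠ 0 := by omega
  -- set up the vectors
  set v : Fin n → D := fun i => if i = i0 then (1:D) else 0 with hvdef
  set p : Fin n → D := e *ᵥ v with hpdef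
  set c : D := p i0 with hcdef
  have hv0 : v i0 = 1 := by simp [hvdef]
  have hq_eq : q = A - e := by rw [hA]; abel
  have hAv : ∀ w : Fin n → D, A *ᵥ w = fun i => v i * (a * w i0) := by
    intro w; rw [hAdef, gncStdMulVec]
  have hep : e *ᵥ p = p := by
    rw [hpdef, Matrix.mulVec_mulVec, he]
  have hqv : q *ᵥ v = fun i => v i * a - p i := by
    rw [hq_eq, Matrix.sub_mulVec, hAv v]
    funext i; simp [hv0, hpdef]
  have hqp : q *ᵥ p = fun i => v i * (a * c) - p i := by
    rw [hq_eq, Matrix.sub_mulVec, hAv p, hep, ← hcdef]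
    rfl
  -- main induction
  have hmain : ∀ k, q ^ k *ᵥ v = fun i => v i * (gncAux a c k).1 + p i * (gncAux a c k).2 := by
    intro k
    induction k with
    | zero => funext i; simp [gncAux]
    | succ k ih =>
        rw [pow_succ', ← Matrix.mulVec_mulVec, ih]
        have : (fun i => v i * (gncAux a c k).1 + p i * (gncAux a c k).2)
            = (fun i => v i * (gncAux a c k).1) + fun i => p i * (gncAux a c k).2 := rfl
        rw [this, Matrix.mulVec_add, gncMulVecRight q v, gncMulVecRight q p, hqv, hqp]
        funext i
        show (v i * a - p i) * (gncAux a c k).1 + (v i * (a * c) - p i) * (gncAux a c k).2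
          = v i * (gncAux a c (k+1)).1 + p i * (gncAux a c (k+1)).2
        simp only [gncAux]
        noncomm_ring
  have hzero : ∀ i, v i * (gncAux a c N).1 + p i * (gncAux a c N).2 = 0 := by
    intro i
    have := congrFun ((hmain N).symm.trans (by rw [hN, Matrix.zero_mulVec])) i
    simpa using this
  have h0N : (gncAux a c N).1 + c * (gncAux a c N).2 = 0 := by
    have := hzero i0
    rwa [hv0, one_mul, ← hcdef] at this
  by_cases hc0 : c = 0
  · -- α_k = a^k, so a^N = 0
    have hα : ∀ k, (gncAux a c k).1 = a ^ k := by
      intro k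
      induction k with
      | zero => simp [gncAux]
      | succ k ih =>
          simp only [gncAux]
          rw [ih, hc0]
          simp [pow_succ']
    rw [hα, hc0, zero_mul, add_zero] at h0N
    exact h0 (pow_eq_zero_iff hNpos |>.mp h0N)
  by_cases hc1 : c = 1
  · -- α_k + β_k = (a-1)^k, so (a-1)^N = 0
    have hs : ∀ k, (gncAux a c k).1 + (gncAux a c k).2 = (a - 1) ^ k := by
      intro k
      induction k with
      | zero => simp [gncAux]
      | succ k ih =>
          have : (gncAux a c (k+1)).1 + (gncAux a c (k+1)).2
              = (a - 1) * ((gncAux a c k).1 + (gncAux a c k).2) := by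
            simp only [gncAux, hc1]; noncomm_ring
          rw [this, ih, ← pow_succ']
    have hb : c * (gncAux a c N).2 = (gncAux a c N).2 := by rw [hc1, one_mul]
    rw [hb, hs N] at h0N
    have := pow_eq_zero_iff hNpos |>.mp h0N
    exact h1 (by linear_combination (norm := noncomm_ring) this)
  · -- c ∉ {0,1}: p is not a scalar multiple of v
    have hex : ∃ i, p i ≠ v i * c := by
      by_contra hcon
      push_neg at hcon
      have hpvc : p = fun i => v i * c := funext hcon
      have h2 : p = fun i => p i * c := by
        conv_lhs => rw [← hep, hpvc]
        rw [gncMulVecRight e v c]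
      have h3 := congrFun h2 i0
      rw [← hcdef] at h3
      have hcc : (c - 1) * c = 0 := by linear_combination (norm := noncomm_ring) -h3
      rcases mul_eq_zero.mp hcc with h | h
      · exact hc1 (by linear_combination (norm := noncomm_ring) h)
      · exact hc0 h
    obtain ⟨i, hi⟩ := hex
    have hii0 : i ≠ i0 := by
      intro h; rw [h, hv0, one_mul, ← hcdef] at hi; exact hi rfl
    have hvi : v i = 0 := by simp [hvdef, hii0]
    have hpi : p i ≠ 0 := by rwa [hvi, zero_mul] at hi
    -- β_N = 0 and α_N = 0
    have hβN : (gncAux a c N).2 = 0 := by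
      have := hzero i
      rw [hvi, zero_mul, zero_add] at this
      rcases mul_eq_zero.mp this with h | h
      · exact absurd h hpi
      · exact h
    have hαN : (gncAux a c N).1 = 0 := by
      rw [hβN, mul_zero, add_zero] at h0N; exact h0N
    -- downward induction
    have key : ∀ j, j ≤ N → (gncAux a c (N - j)).1 = 0 ∧ (gncAux a c (N - j)).2 = 0 := by
      intro j
      induction j with
      | zero => intro _; simpa using ⟨hαN, hβN⟩
      | succ j ih =>
          intro hj
          have ⟨ha1, hb1⟩ := ih (by omega)
          have hstep : N - j = (N - (j+1)) + 1 := by omega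
          rw [hstep] at ha1 hb1
          set k := N - (j + 1)
          simp only [gncAux] at ha1 hb1
          -- from ha1 : a * (α + c*β) = 0
          have hsum : (gncAux a c k).1 + c * (gncAux a c k).2 = 0 :=
            (mul_eq_zero.mp ha1).resolve_left h0
          have hsum2 : (gncAux a c k).1 + (gncAux a c k).2 = 0 := by
            have := hb1; rwa [neg_eq_zero] at this
          have hβ : (gncAux a c k).2 = 0 := by
            have hd : (c - 1) * (gncAux a c k).2 = 0 := by
              linear_combination (norm := noncomm_ring) hsum - hsum2
            rcases mul_eq_zero.mp hd with h | h
            · exact absurd (by linear_combination (norm := noncomm_ring) h) hc1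
            · exact h
          have hα : (gncAux a c k).1 = 0 := by
            rw [hβ, add_zero] at hsum2; exact hsum2
          exact ⟨hα, hβ⟩
    have := (key N le_rfl).1
    rw [Nat.sub_self] at this
    simp [gncAux] at this
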